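/- Let M be an L_n-structure, A a finite substructure with A ≤ M (i.e., δ(X/A) ≥ 0 for all finite A ⊆ X ⊆ M, where δ(X) = |X| - |R^X|). Suppose x̄₁, ..., x̄_k are distinct r-tuples from A with k ≥ s = n - r + 1, and ȳ is an (s-1)-tuple in M with (ȳ, x̄_i) ∈ R^M for all i ≤ k. Then all elements of ȳ lie in A. -/
import Mathlib


/-- If `A ≤ M` (strong, with respect to `δ(X) = |X| - |R^X|`), `x̄₁, …, x̄_k` are
distinct `r`-tuples from `A` with `k ≥ s`, and `ȳ` is an `(s-1)`-tuple of `M` with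
`(ȳ, x̄_j) ∈ R` for all `j`, then every element of `ȳ` lies in `A`. -/
theorem stmt_12 {α : Type*} [DecidableEq α] (n r s : ℕ)
    (hn : 2 ≤ n) (hr : 0 < r) (hrn : r < n) (hs : s = n - r + 1)
    (R : Finset ((Fin (s - 1) → α) × (Fin r → α)))
    (A : Finset α)
    (hstrong : ∀ X : Finset α, A ⊆ X →
      0 ≤ ((X.card : ℤ) -
          ((R.filter fun p => (∀ i, p.1 i ∈ X) ∧ (∀ i, p.2 i ∈ X)).card : ℤ)) -
        ((A.card : ℤ) -
          ((R.filter fun p => (∀ i, p.1 i ∈ A) ∧ (∀ i, p.2 i ∈ A)).card : ℤ)))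
    (k : ℕ) (hk : s ≤ k)
    (x : Fin k → (Fin r → α)) (hxinj : Function.Injective x)
    (hxA : ∀ j i, x j i ∈ A)
    (y : Fin (s - 1) → α) (hy : ∀ j, (y, x j) ∈ R) :
    ∀ i, y i ∈ A := by
  intro i0
  by_contra hyi
  set X : Finset α := A ∪ Finset.univ.image y with hX
  have hAX : A ⊆ X := Finset.subset_union_left
  have hyX : ∀ i, y i ∈ X := fun i =>
    Finset.mem_union_right _ (Finset.mem_image_of_mem y (Finset.mem_univ i))
  -- cardinality bound on X
  have hXcard : X.card ≤ A.card + (s - 1) := by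
    calc X.card ≤ A.card + (Finset.univ.image y).card := Finset.card_union_le _ _
    _ ≤ A.card + (s - 1) := by
        have := Finset.card_image_le (s := (Finset.univ : Finset (Fin (s-1)))) (f := y)
        simpa using Nat.add_le_add_left (by simpa using this) A.card
  -- the new relation tuples
  set N : Finset ((Fin (s - 1) → α) × (Fin r → α)) :=
    Finset.univ.image fun j : Fin k => (y, x j) with hN
  have hNcard : N.card = k := by
    rw [hN, Finset.card_image_of_injective _ (fun a b hab => hxinj (congrArg Prod.snd hab))]
    simp
  have hsub : (R.filter fun p => (∀ i, p.1 i ∈ A) ∧ (∀ i, p.2 i ∈ A)) ∪ N ⊆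
      (R.filter fun p => (∀ i, p.1 i ∈ X) ∧ (∀ i, p.2 i ∈ X)) := by
    intro p hp
    rcases Finset.mem_union.1 hp with hp | hp
    · rcases Finset.mem_filter.1 hp with ⟨hpR, h1, h2⟩
      exact Finset.mem_filter.2 ⟨hpR, fun i => hAX (h1 i), fun i => hAX (h2 i)⟩
    · rcases Finset.mem_image.1 hp with ⟨j, _, rfl⟩
      exact Finset.mem_filter.2 ⟨hy j, fun i => hyX i, fun i => hAX (hxA j i)⟩
  have hdisj : Disjoint (R.filter fun p => (∀ i, p.1 i ∈ A) ∧ (∀ i, p.2 i ∈ A)) N := by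
    rw [Finset.disjoint_right]
    intro p hp hpA
    rcases Finset.mem_image.1 hp with ⟨j, _, rfl⟩
    exact hyi ((Finset.mem_filter.1 hpA).2.1 i0)
  have hcard : (R.filter fun p => (∀ i, p.1 i ∈ A) ∧ (∀ i, p.2 i ∈ A)).card + k ≤
      (R.filter fun p => (∀ i, p.1 i ∈ X) ∧ (∀ i, p.2 i ∈ X)).card := by
    calc _ = ((R.filter fun p => (∀ i, p.1 i ∈ A) ∧ (∀ i, p.2 i ∈ A)) ∪ N).card := by
          rw [Finset.card_union_of_disjoint hdisj, hNcard]
      _ ≤ _ := Finset.card_le_card hsub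
  have := hstrong X hAX
  have hs1 : s - 1 < k := lt_of_lt_of_le (Nat.sub_lt (by omega) one_pos) hk
  -- derive contradiction via integer arithmetic
  have h1 : (X.card : ℤ) ≤ (A.card : ℤ) + (s - 1 : ℕ) := by exact_mod_cast hXcard
  have h2 : ((R.filter fun p => (∀ i, p.1 i ∈ A) ∧ (∀ i, p.2 i ∈ A)).card : ℤ) + k ≤
      ((R.filter fun p => (∀ i, p.1 i ∈ X) ∧ (∀ i, p.2 i ∈ X)).card : ℤ) := by
    exact_mod_cast hcard
  have h3 : ((s - 1 : ℕ) : ℤ) < k := by exact_mod_cast hs1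
  omega
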